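/- For every n ≥ 2, f(n, C₃) ≤ 2^{n-2}; that is, the power set 𝒫(n) can be partitioned into 2^{n-2} triangle-free parts. (Explicitly, placing into one part the four sets A, [n]\A, A∪{n}, [n]\(A∪{n}) for each A ⊆ [n-1] gives such a partition.) -/
import Mathlib


/-- Three distinct sets `A, B, C ⊆ [n]` form a Berge triangle if there exist pairwise
distinct elements `x ∈ A ∩ B`, `y ∈ A ∩ C`, `z ∈ B ∩ C`. -/
def BergeTriangle {n : ℕ} (A B C : Finset (Fin n)) : Prop :=
  A ≠ B ∧ A ≠ C ∧ B ≠ C ∧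
    ∃ x y z : Fin n, x ≠ y ∧ x ≠ z ∧ y ≠ z ∧
      x ∈ A ∩ B ∧ y ∈ A ∩ C ∧ z ∈ B ∩ C

/-- A family of subsets of `[n]` is triangle-free if no three of its members form a
Berge triangle. -/
def TriangleFree {n : ℕ} (F : Set (Finset (Fin n))) : Prop :=
  ∀ A ∈ F, ∀ B ∈ F, ∀ C ∈ F, ¬ BergeTriangle A B C

namespace F3aux
variable {m : ℕ}

def pL : Fin (m + 2) := ⟨m + 1, by omega⟩
def pP : Fin (m + 2) := ⟨m, by omega⟩

def cls (S : Finset (Fin (m + 2))) : Set (Finset (Fin (m + 2))) :=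
  {S, S ∪ {pL}, Sᶜ, Sᶜ.erase pL}

def n1 (B : Finset (Fin (m + 2))) : Finset (Fin (m + 2)) :=
  if pL ∈ B then Bᶜ else B

def n2 (B : Finset (Fin (m + 2))) : Finset (Fin (m + 2)) :=
  if pP ∈ B then Bᶜ.erase pL else B

def normB (B : Finset (Fin (m + 2))) : Finset (Fin (m + 2)) := n2 (n1 B)

def proj (S : Finset (Fin (m + 2))) : Finset (Fin m) :=
  Finset.univ.filter (fun i => Fin.castLE (Nat.le_add_right m 2) i ∈ S)

lemma pL_not_mem_n1 (B : Finset (Fin (m + 2))) : pL ∉ n1 B := by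
  unfold n1; split <;> simp_all

lemma pL_not_mem_normB (B : Finset (Fin (m + 2))) : pL ∉ normB B := by
  have h := pL_not_mem_n1 B
  unfold normB n2; split <;> simp_all

lemma pP_not_mem_normB (B : Finset (Fin (m + 2))) : pP ∉ normB B := by
  unfold normB n2; split <;> simp_all

lemma mem_cls_normB (B : Finset (Fin (m + 2))) : B ∈ cls (normB B) := by
  have hL : pL ∉ n1 B := pL_not_mem_n1 B
  have h1 : B = n1 B ∨ B = (n1 B)ᶜ := by
    unfold n1; split <;> simp
  have h2 : normB B = n1 B ∨ (n1 B)ᶜ = normB B ∪ {pL} := by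
    unfold normB n2; split
    · right
      ext x
      simp only [Finset.mem_compl, Finset.mem_union, Finset.mem_erase,
        Finset.mem_singleton]
      have hLc : pL ∈ (n1 B)ᶜ := by simpa using hL
      rw [Finset.mem_compl] at hLc
      by_cases hxl : x = pL <;> simp [hxl, hLc]
    · left; rfl
  obtain ⟨S, hS⟩ : ∃ S, normB B = S := ⟨_, rfl⟩
  rw [hS] at h2 ⊢
  simp only [cls, Set.mem_insert_iff, Set.mem_singleton_iff]
  rcases h2 with h2 | h2
  · rcases h1 with h1 | h1
    · exact Or.inl (h1.trans h2.symm)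
    · exact Or.inr (Or.inr (Or.inl (by rw [h1, h2])))
  · rcases h1 with h1 | h1
    · refine Or.inr (Or.inr (Or.inr ?_))
      have h3 : n1 B = (S ∪ {pL})ᶜ := by rw [← h2, compl_compl]
      rw [h1, h3]
      ext x
      simp only [Finset.mem_compl, Finset.mem_union, Finset.mem_erase,
        Finset.mem_singleton]
      tauto
    · exact Or.inr (Or.inl (h1.trans h2))

lemma proj_inj {S T : Finset (Fin (m + 2))} (hSP : pP ∉ S) (hSL : pL ∉ S)
    (hTP : pP ∉ T) (hTL : pL ∉ T) (h : proj S = proj T) : S = T := by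
  ext x
  by_cases hx : x.1 < m
  · have hh := Finset.ext_iff.mp h ⟨x.1, hx⟩
    simp only [proj, Finset.mem_filter, Finset.mem_univ, true_and] at hh
    have hc : Fin.castLE (Nat.le_add_right m 2) (⟨x.1, hx⟩ : Fin m) = x := by
      apply Fin.ext; rfl
    rwa [hc] at hh
  · have hx2 := x.2
    have : x = pP ∨ x = pL := by
      rcases Nat.lt_or_ge x.1 (m + 1) with h' | h'
      · left; apply Fin.ext; simp [pP]; omega
      · right; apply Fin.ext; simp [pL]; omega
    rcases this with rfl | rfl <;> simp [hSP, hSL, hTP, hTL]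

lemma cls_tf (S : Finset (Fin (m + 2))) (hP : pP ∉ S) (hL : pL ∉ S) :
    ∀ A ∈ cls S, ∀ B ∈ cls S, ∀ C ∈ cls S, ¬ BergeTriangle A B C := by
  intro A hA B hB C hC ⟨hAB, hAC, hBC, x, y, z, hxy, hxz, hyz, hx, hy, hz⟩
  simp only [cls, Set.mem_insert_iff, Set.mem_singleton_iff] at hA hB hC
  rcases hA with rfl | rfl | rfl | rfl <;>
    rcases hB with rfl | rfl | rfl | rfl <;>
      rcases hC with rfl | rfl | rfl | rfl <;>
        first
          | exact hAB rfl
          | exact hAC rfl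
          | exact hBC rfl
          | (simp only [Finset.mem_inter, Finset.mem_union, Finset.mem_erase,
              Finset.mem_compl, Finset.mem_singleton] at hx hy hz; tauto)

end F3aux

theorem f_C3_upper (n : ℕ) (hn : 2 ≤ n) :
    ∃ c : Finset (Fin n) → Fin (2 ^ (n - 2)),
      ∀ i : Fin (2 ^ (n - 2)), TriangleFree {A | c A = i} := by
  obtain ⟨m, rfl⟩ : ∃ m, n = m + 2 := ⟨n - 2, by omega⟩
  show ∃ c : Finset (Fin (m + 2)) → Fin (2 ^ m),
    ∀ i : Fin (2 ^ m), TriangleFree {A | c A = i}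
  have ecard : Fintype.card (Finset (Fin m)) = 2 ^ m := by simp
  let e : Finset (Fin m) ≃ Fin (2 ^ m) :=
    (Fintype.equivFin _).trans (finCongr ecard)
  refine ⟨fun B => e (F3aux.proj (F3aux.normB B)), fun i => ?_⟩
  intro A hA B hB C hC
  have hnorm : ∀ X : Finset (Fin (m + 2)),
      e (F3aux.proj (F3aux.normB X)) = i → F3aux.normB X = F3aux.normB A := by
    intro X hX
    exact F3aux.proj_inj (F3aux.pP_not_mem_normB X) (F3aux.pL_not_mem_normB X)
      (F3aux.pP_not_mem_normB A) (F3aux.pL_not_mem_normB A)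
      (e.injective (hX.trans hA.symm))
  have hmA : A ∈ F3aux.cls (F3aux.normB A) := F3aux.mem_cls_normB A
  have hmB : B ∈ F3aux.cls (F3aux.normB A) := by
    rw [← hnorm B hB]; exact F3aux.mem_cls_normB B
  have hmC : C ∈ F3aux.cls (F3aux.normB A) := by
    rw [← hnorm C hC]; exact F3aux.mem_cls_normB C
  exact F3aux.cls_tf _ (F3aux.pP_not_mem_normB A) (F3aux.pL_not_mem_normB A)
    A hmA B hmB C hmC
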